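/- arXiv:0710.1797 — 2 statements merged into one kernel-verified Lean document; each statement's English description precedes it below -/
import Mathlib

section
/- Let n, t, r, q be positive integers with n = qt + r and r dividing t. For i ∈ {1,...,t}, define g_i = {x ∈ {1,...,n} : x ≡ i (mod t)} ∪ {x ∈ {1,...,n} : x > n - r and x ≡ i (mod r)}. Let G be the subgroup of (𝒫({1,...,n}), Δ) generated by g_1,...,g_t. Then |G| = 2^t and every nonempty element of G intersects every cyclic block of length t modulo n. -/
open Finset
open scoped symmDiff Classical

/-- The cyclic block of length `t` modulo `n` starting at `a`, i.e. `{a+1,...,a+t}`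
reduced modulo `n` into `{1,...,n}`. -/
def cyclicBlock (n t a : ℕ) : Finset ℕ :=
  (Finset.range t).image (fun j => (a + j) % n + 1)

instance : Std.Commutative (α := Finset ℕ) (· ∆ ·) := ⟨symmDiff_comm⟩
instance : Std.Associative (α := Finset ℕ) (· ∆ ·) := ⟨symmDiff_assoc⟩

/-- Iterated symmetric difference `∆_{i ∈ I} g i`. -/
def symmDiffs (I : Finset ℕ) (g : ℕ → Finset ℕ) : Finset ℕ :=
  I.fold (· ∆ ·) ∅ g

lemma mem_symmDiffs {g : ℕ → Finset ℕ} {x : ℕ} (I : Finset ℕ) :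
    x ∈ symmDiffs I g ↔ Odd ((I.filter (fun i => x ∈ g i)).card) := by
  induction I using Finset.induction_on with
  | empty => simp [symmDiffs]
  | insert a s h ih =>
    rw [show symmDiffs (insert a s) g = g a ∆ symmDiffs s g from Finset.fold_insert h,
      Finset.mem_symmDiff, ih, Finset.filter_insert]
    by_cases hx : x ∈ g a
    · rw [if_pos hx, Finset.card_insert_of_notMem (fun hc => h (Finset.mem_filter.mp hc).1)]
      simp only [hx, true_and, not_true_eq_false, and_false, or_false, Nat.odd_iff]
      omega
    · rw [if_neg hx]
      simp [hx]

lemma mod_eq_cancel {t i i0 : ℕ} (hi : 1 ≤ i) (hi' : i ≤ t) (h0 : 1 ≤ i0) (h0' : i0 ≤ t)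
    (h : i % t = i0 % t) : i = i0 := by
  have h1 : i % t = if i = t then 0 else i := by
    split
    · rename_i hh; rw [hh, Nat.mod_self]
    · exact Nat.mod_eq_of_lt (by omega)
  have h2 : i0 % t = if i0 = t then 0 else i0 := by
    split
    · rename_i hh; rw [hh, Nat.mod_self]
    · exact Nat.mod_eq_of_lt (by omega)
  rw [h1, h2] at h
  split at h <;> split at h <;> omega

theorem stmt5 (n q t r : ℕ) (hq : 0 < q) (ht : 0 < t) (hr : 0 < r)
    (hn : n = q * t + r) (hrt : r ∣ t)
    (g : ℕ → Finset ℕ)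
    (hg : ∀ i, g i = (Finset.Icc 1 n).filter
      (fun x => x % t = i % t ∨ (n - r < x ∧ x % r = i % r))) :
    ((Finset.Icc 1 t).powerset.image (fun I => symmDiffs I g)).card = 2 ^ t ∧
    (∀ I ⊆ Finset.Icc 1 t, symmDiffs I g ≠ ∅ →
      ∀ a < n, (symmDiffs I g ∩ cyclicBlock n t a).Nonempty) := by
  obtain ⟨q, rfl⟩ : ∃ q', q = q' + 1 := ⟨q - 1, by omega⟩
  have hn' : n = q * t + t + r := by rw [hn]; ring
  have hrle : r ≤ t := Nat.le_of_dvd ht hrt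
  obtain ⟨u, hu⟩ := hrt
  have hn0 : 0 < n := by omega
  -- membership characterization for x in the "low" region [1, (q+1)*t]
  have mem_low : ∀ (I : Finset ℕ), I ⊆ Finset.Icc 1 t → ∀ x i0, 1 ≤ x → x ≤ q * t + t →
      1 ≤ i0 → i0 ≤ t → x % t = i0 % t → (x ∈ symmDiffs I g ↔ i0 ∈ I) := by
    intro I hI x i0 hx1 hx2 h1 h2 hmod
    rw [mem_symmDiffs]
    have hfe : I.filter (fun i => x ∈ g i) = I.filter (fun i => i = i0) := by
      apply Finset.filter_congr
      intro i hi
      have hi' := hI hi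
      rw [Finset.mem_Icc] at hi'
      rw [hg i]
      simp only [Finset.mem_filter, Finset.mem_Icc, eq_iff_iff]
      constructor
      · rintro ⟨-, h | h⟩
        · exact mod_eq_cancel hi'.1 hi'.2 h1 h2 (h.symm.trans hmod)
        · exact absurd h.1 (by omega)
      · rintro rfl
        exact ⟨⟨hx1, by omega⟩, Or.inl hmod⟩
    rw [hfe, Finset.filter_eq']
    by_cases hm : i0 ∈ I
    · rw [if_pos hm]
      simp [hm, Nat.odd_iff]
    · rw [if_neg hm]
      simp [hm]
  -- membership characterization for x in the "high" region ((q+1)*t, n]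
  have mem_high : ∀ (I : Finset ℕ), I ⊆ Finset.Icc 1 t → ∀ x i0, q * t + t < x → x ≤ n →
      x % r = i0 % r →
      (x ∈ symmDiffs I g ↔ Odd ((I.filter (fun i => i % r = i0 % r)).card)) := by
    intro I hI x i0 hx1 hx2 hmod
    rw [mem_symmDiffs]
    have hur : q * t + t = (q * u + u) * r := by rw [hu]; ring
    have hs : x = (x - (q * t + t)) + (q * u + u) * r := by omega
    have hxr : x % r = (x - (q * t + t)) % r := by
      conv_lhs => rw [hs]
      exact Nat.add_mul_mod_self_right _ _ _
    have hxt : x % t = (x - (q * t + t)) % t := by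
      have hqt : q * t + t = (q + 1) * t := by ring
      have hs' : x = (x - (q * t + t)) + (q + 1) * t := by omega
      conv_lhs => rw [hs']
      exact Nat.add_mul_mod_self_right _ _ _
    have hfe : I.filter (fun i => x ∈ g i) = I.filter (fun i => i % r = i0 % r) := by
      apply Finset.filter_congr
      intro i hi
      have hi' := hI hi
      rw [Finset.mem_Icc] at hi'
      rw [hg i]
      simp only [Finset.mem_filter, Finset.mem_Icc, eq_iff_iff]
      constructor
      · rintro ⟨-, h | h⟩
        · have heq : i = x - (q * t + t) :=
            mod_eq_cancel hi'.1 hi'.2 (by omega) (by omega) (h.symm.trans hxt)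
          rw [heq]
          exact hxr.symm.trans hmod
        · exact h.2.symm.trans hmod
      · intro h
        exact ⟨⟨by omega, hx2⟩, Or.inr ⟨by omega, hmod.trans h.symm⟩⟩
    rw [hfe]
  constructor
  · -- Part 1 : cardinality via injectivity
    have hinj : Set.InjOn (fun I => symmDiffs I g)
        ((Finset.Icc 1 t).powerset : Finset (Finset ℕ)) := by
      intro I hI J hJ hIJ
      rw [Finset.mem_coe, Finset.mem_powerset] at hI hJ
      simp only at hIJ
      ext i
      by_cases hit : 1 ≤ i ∧ i ≤ t
      · have h1 := mem_low I hI i i hit.1 (by omega) hit.1 hit.2 rfl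
        have h2 := mem_low J hJ i i hit.1 (by omega) hit.1 hit.2 rfl
        rw [← h1, ← h2, hIJ]
      · constructor <;> intro hmem
        · exact absurd (Finset.mem_Icc.mp (hI hmem)) (by omega)
        · exact absurd (Finset.mem_Icc.mp (hJ hmem)) (by omega)
    rw [Finset.card_image_of_injOn hinj, Finset.card_powerset, Nat.card_Icc,
      Nat.add_sub_cancel]
  · -- Part 2 : every nonempty element meets every cyclic block
    intro I hI hne a ha
    have hIne : I.Nonempty := by
      rw [Finset.nonempty_iff_ne_empty]
      rintro rfl
      exact hne (by simp [symmDiffs])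
    have mem_block : ∀ y, 1 ≤ y → y ≤ n → (y - 1 + (n - a)) % n < t →
        y ∈ cyclicBlock n t a := by
      intro y hy1 hy2 hj
      simp only [cyclicBlock, Finset.mem_image, Finset.mem_range]
      refine ⟨(y - 1 + (n - a)) % n, hj, ?_⟩
      rw [Nat.add_mod_mod]
      have h2 : a + (y - 1 + (n - a)) = (y - 1) + n := by omega
      rw [h2, Nat.add_mod_right, Nat.mod_eq_of_lt (by omega)]
      omega
    -- existence of a "low" anchor offset, given a base position c
    have subA : ∀ c, c < n → (c < t ∨ t + r ≤ c) → ∃ w, w % t = 0 ∧ w ≤ q * t ∧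
        (c + w) % n < t := by
      intro c hc hcase
      rcases hcase with h | h
      · refine ⟨0, Nat.zero_mod t, Nat.zero_le _, ?_⟩
        rw [Nat.add_zero, Nat.mod_eq_of_lt hc]
        exact h
      · set d := (n - c - 1) / t with hd
        set e := (n - c - 1) % t with he
        have hdm : t * d + e = n - c - 1 := Nat.div_add_mod (n - c - 1) t
        have hem : e < t := Nat.mod_lt _ ht
        have hqt : t * q = q * t := by ring
        have hdq : d < q := by
          by_contra hcon
          push_neg at hcon
          have h3 : t * q ≤ t * d := Nat.mul_le_mul (le_refl t) hcon
          omega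
        refine ⟨t * d + t, ?_, ?_, ?_⟩
        · have h5 : t * d + t = t * (d + 1) := by ring
          rw [h5]
          exact Nat.mul_mod_right _ _
        · have h5 : t * (d + 1) ≤ t * q := Nat.mul_le_mul (le_refl t) (by omega)
          have h6 : t * (d + 1) = t * d + t := by ring
          omega
        · have hval : c + (t * d + t) = n + (t - 1 - e) := by omega
          rw [hval, Nat.add_mod_left, Nat.mod_eq_of_lt (by omega)]
          omega
    -- turning a low anchor into a member of the intersection
    have anchor : ∀ i0, i0 ∈ I → ∀ w, w % t = 0 → w ≤ q * t →
        (((i0 - 1 + (n - a)) % n + w) % n < t) →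
        (symmDiffs I g ∩ cyclicBlock n t a).Nonempty := by
      intro i0 hi0 w hw1 hw2 hpos
      have hi0' := hI hi0
      rw [Finset.mem_Icc] at hi0'
      refine ⟨w + i0, Finset.mem_inter.mpr ⟨?_, ?_⟩⟩
      · refine (mem_low I hI (w + i0) i0 (by omega) (by omega) hi0'.1 hi0'.2 ?_).mpr hi0
        rw [Nat.add_mod, hw1, Nat.zero_add, Nat.mod_mod_of_dvd _ (dvd_refl t)]
      · apply mem_block _ (by omega) (by omega)
        have h2 : w + i0 - 1 + (n - a) = (i0 - 1 + (n - a)) + w := by omega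
        rw [h2, ← Nat.mod_add_mod]
        exact hpos
    by_cases hcase : ∃ i0 ∈ I, Odd ((I.filter (fun i => i % r = i0 % r)).card)
    · -- Case 1: some residue class mod r has odd multiplicity in I
      obtain ⟨i0, hi0, hodd⟩ := hcase
      have hi0' := hI hi0
      rw [Finset.mem_Icc] at hi0'
      set s0 : ℕ := if i0 % r = 0 then r else i0 % r with hs0
      have hs0r : s0 % r = i0 % r := by
        rw [hs0]
        split
        · rw [Nat.mod_self]; omega
        · exact Nat.mod_eq_of_lt (Nat.mod_lt _ hr)
      have hs01 : 1 ≤ s0 := by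
        rw [hs0]; split
        · omega
        · omega
      have hs0le : s0 ≤ i0 := by
        rw [hs0]; split
        · rename_i hz
          have : r ∣ i0 := Nat.dvd_of_mod_eq_zero hz
          exact Nat.le_of_dvd (by omega) this
        · exact Nat.le_of_lt_succ (Nat.lt_succ_of_le (Nat.mod_le _ _))
      have hs0r' : s0 ≤ r := by
        rw [hs0]; split
        · omega
        · exact le_of_lt (Nat.mod_lt _ hr)
      have hdvd_e : r ∣ (i0 - s0) := by
        rw [hs0]
        split
        · rename_i hz
          exact Nat.dvd_sub (Nat.dvd_of_mod_eq_zero hz) (dvd_refl r)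
        · have := Nat.div_add_mod i0 r
          refine ⟨i0 / r, by omega⟩
      have he_le : i0 - s0 ≤ t - r := by
        rcases Nat.eq_zero_or_pos (i0 - s0) with h0 | h0
        · omega
        · have h1 : r ∣ (t - (i0 - s0)) := Nat.dvd_sub ⟨u, hu⟩ hdvd_e
          have h2 : 0 < t - (i0 - s0) := by omega
          have := Nat.le_of_dvd h2 h1
          omega
      set c := (i0 - 1 + (n - a)) % n with hc
      have hcn : c < n := Nat.mod_lt _ hn0
      by_cases hcc : c < t ∨ t + r ≤ c
      · obtain ⟨w, hw1, hw2, hw3⟩ := subA c hcn hcc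
        exact anchor i0 hi0 w hw1 hw2 hw3
      · push_neg at hcc
        obtain ⟨hcc1, hcc2⟩ := hcc
        -- use the tail element y = q*t + t + s0
        set y := q * t + t + s0 with hy
        have hyS : y ∈ symmDiffs I g := by
          refine (mem_high I hI y i0 (by omega) (by omega) ?_).mpr hodd
          have h1 : y = s0 + (q * u + u) * r := by
            have : (q * u + u) * r = q * t + t := by rw [hu]; ring
            omega
          rw [h1, Nat.add_mul_mod_self_right]
          exact hs0r
        have hyB : y ∈ cyclicBlock n t a := by
          apply mem_block _ (by omega) (by omega)
          have h2 : y - 1 + (n - a) = (i0 - 1 + (n - a)) + (q * t + t - (i0 - s0)) := by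
            omega
          rw [h2, ← Nat.mod_add_mod, ← hc]
          have h3 : c + (q * t + t - (i0 - s0)) = n + (c + (q * t + t - (i0 - s0)) - n) := by
            omega
          rw [h3, Nat.add_mod_left, Nat.mod_eq_of_lt (by omega)]
          omega
        exact ⟨y, Finset.mem_inter.mpr ⟨hyS, hyB⟩⟩
    · -- Case 2: every residue class mod r has even multiplicity in I
      push_neg at hcase
      obtain ⟨i, hiI⟩ := hIne
      have heven : ¬ Odd ((I.filter (fun j => j % r = i % r)).card) := hcase i hiI
      rw [Nat.odd_iff] at heven
      have hmemf : i ∈ I.filter (fun j => j % r = i % r) :=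
        Finset.mem_filter.mpr ⟨hiI, rfl⟩
      have hcard1 : 1 ≤ (I.filter (fun j => j % r = i % r)).card :=
        Finset.card_pos.mpr ⟨i, hmemf⟩
      have hcard2 : 1 < (I.filter (fun j => j % r = i % r)).card := by omega
      obtain ⟨b1, hb1, b2, hb2, hb12⟩ := Finset.one_lt_card.mp hcard2
      rw [Finset.mem_filter] at hb1 hb2
      have hpair : ∃ i1 i2, i1 ∈ I ∧ i2 ∈ I ∧ i1 < i2 ∧ i1 % r = i2 % r := by
        rcases lt_or_gt_of_ne hb12 with h | h
        · exact ⟨b1, b2, hb1.1, hb2.1, h, hb1.2.trans hb2.2.symm⟩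
        · exact ⟨b2, b1, hb2.1, hb1.1, h, hb2.2.trans hb1.2.symm⟩
      obtain ⟨i1, i2, hi1, hi2, hlt, hmr⟩ := hpair
      have hi1' := hI hi1
      have hi2' := hI hi2
      rw [Finset.mem_Icc] at hi1' hi2'
      have hdvd : r ∣ (i2 - i1) := (Nat.modEq_iff_dvd' (le_of_lt hlt)).mp hmr
      have hdge : r ≤ i2 - i1 := Nat.le_of_dvd (by omega) hdvd
      have hdle : i2 - i1 ≤ t - r := by
        have h1 : r ∣ (t - (i2 - i1)) := Nat.dvd_sub ⟨u, hu⟩ hdvd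
        have h2 : 0 < t - (i2 - i1) := by omega
        have := Nat.le_of_dvd h2 h1
        omega
      set c1 := (i1 - 1 + (n - a)) % n with hc1
      have hc1n : c1 < n := Nat.mod_lt _ hn0
      by_cases hcc : c1 < t ∨ t + r ≤ c1
      · obtain ⟨w, hw1, hw2, hw3⟩ := subA c1 hc1n hcc
        exact anchor i1 hi1 w hw1 hw2 hw3
      · push_neg at hcc
        obtain ⟨hcc1, hcc2⟩ := hcc
        set c2 := (i2 - 1 + (n - a)) % n with hc2
        have hc2n : c2 < n := Nat.mod_lt _ hn0
        have hc2eq : c2 = (c1 + (i2 - i1)) % n := by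
          rw [hc2, hc1, Nat.mod_add_mod]
          congr 1
          omega
        have hdisj : c2 < t ∨ t + r ≤ c2 := by
          rcases Nat.lt_or_ge (c1 + (i2 - i1)) n with h | h
          · right
            rw [hc2eq, Nat.mod_eq_of_lt h]
            omega
          · left
            have h3 : c1 + (i2 - i1) = n + (c1 + (i2 - i1) - n) := by omega
            rw [hc2eq, h3, Nat.add_mod_left, Nat.mod_eq_of_lt (by omega)]
            omega
        obtain ⟨w, hw1, hw2, hw3⟩ := subA c2 hc2n hdisj
        exact anchor i2 hi2 w hw1 hw2 hw3
end

section
/- Let n = qt + r with r dividing t, and define g_i as in the case r | t: g_i = {x ∈ {1,...,n} : x ≡ i (mod t)} ∪ {x : x > n-r, x ≡ i (mod r)}. If I ⊆ {1,...,t} contains two distinct elements a, b with a ≡ b (mod r), letting i and j be the least and greatest elements of I congruent to a modulo r, the set g = Δ_{s∈I} g_s contains both i and (q-1)t + j, and (n + i) − ((q−1)t + j) ≤ t. -/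
open Finset
open scoped symmDiff Classical

lemma mem_symmDiffs_iff {I : Finset ℕ} {g : ℕ → Finset ℕ} {x : ℕ} :
    x ∈ symmDiffs I g ↔ Odd ((I.filter fun s => x ∈ g s).card) := by
  induction I using Finset.induction with
  | empty => simp [symmDiffs]
  | @insert c I hc ih =>
    have hfold : symmDiffs (insert c I) g = g c ∆ symmDiffs I g :=
      Finset.fold_insert hc
    rw [hfold, Finset.mem_symmDiff, ih, Finset.filter_insert]
    by_cases hx : x ∈ g c
    · have hcf : c ∉ I.filter fun s => x ∈ g s := fun h => hc (Finset.mem_of_mem_filter _ h)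
      rw [if_pos hx, Finset.card_insert_of_notMem hcf, Nat.odd_add_one, Nat.not_odd_iff_even,
        ← Nat.not_odd_iff_even]
      tauto
    · rw [if_neg hx]
      tauto

lemma mod_inj_Icc {s i t : ℕ} (hs : s ∈ Finset.Icc 1 t) (hi : i ∈ Finset.Icc 1 t)
    (h : s % t = i % t) : s = i := by
  simp only [Finset.mem_Icc] at hs hi
  rcases eq_or_lt_of_le hs.2 with h1 | h1 <;> rcases eq_or_lt_of_le hi.2 with h2 | h2
  · omega
  · rw [h1, Nat.mod_self, Nat.mod_eq_of_lt h2] at h; omega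
  · rw [h2, Nat.mod_self, Nat.mod_eq_of_lt h1] at h; omega
  · rwa [Nat.mod_eq_of_lt h1, Nat.mod_eq_of_lt h2] at h

theorem stmt14 (n q t r : ℕ) (hq : 0 < q) (ht : 0 < t) (hr : 0 < r)
    (hrt : r ∣ t) (hrlt : r < t) (hn : n = q * t + r)
    (g : ℕ → Finset ℕ)
    (hg : ∀ s, g s = (Finset.Icc 1 n).filter
      (fun x => x % t = s % t ∨ (n - r < x ∧ x % r = s % r)))
    (I : Finset ℕ) (hI : I ⊆ Finset.Icc 1 t)
    (a b : ℕ) (ha : a ∈ I) (hb : b ∈ I) (hab : a ≠ b) (hmod : a % r = b % r)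
    (i j : ℕ) (hiI : i ∈ I) (hjI : j ∈ I) (hi : i % r = a % r) (hj : j % r = a % r)
    (hmin : ∀ x ∈ I, x % r = a % r → i ≤ x)
    (hmax : ∀ x ∈ I, x % r = a % r → x ≤ j) :
    i ∈ symmDiffs I g ∧ (q - 1) * t + j ∈ symmDiffs I g ∧
      (n + i) - ((q - 1) * t + j) ≤ t := by
  classical
  have hqt : (q - 1) * t + t = q * t := by
    have : (q - 1) + 1 = q := Nat.succ_pred_eq_of_pos hq
    calc (q - 1) * t + t = ((q - 1) + 1) * t := by ring
    _ = q * t := by rw [this]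
  have hiIcc : i ∈ Finset.Icc 1 t := hI hiI
  have hjIcc : j ∈ Finset.Icc 1 t := hI hjI
  have hi1 : 1 ≤ i ∧ i ≤ t := by simpa using hiIcc
  have hj1 : 1 ≤ j ∧ j ≤ t := by simpa using hjIcc
  have hnr : n - r = q * t := by omega
  have htn : t ≤ q * t := Nat.le_mul_of_pos_left t hq
  -- membership of i
  have hfi : (I.filter fun s => i ∈ g s) = {i} := by
    apply Finset.eq_singleton_iff_unique_mem.mpr
    constructor
    · rw [Finset.mem_filter]
      refine ⟨hiI, ?_⟩
      rw [hg i, Finset.mem_filter, Finset.mem_Icc]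
      exact ⟨⟨hi1.1, by omega⟩, Or.inl rfl⟩
    · intro s hs
      rw [Finset.mem_filter, hg s, Finset.mem_filter, Finset.mem_Icc] at hs
      obtain ⟨hsI, _, h | h⟩ := hs
      · exact mod_inj_Icc (hI hsI) hiIcc h.symm
      · omega
  -- membership of (q-1)*t + j
  have hxmod : ((q - 1) * t + j) % t = j % t := by
    rw [add_comm, Nat.add_mul_mod_self_right]
  have hxle : (q - 1) * t + j ≤ q * t := by omega
  have hfj : (I.filter fun s => (q - 1) * t + j ∈ g s) = {j} := by
    apply Finset.eq_singleton_iff_unique_mem.mpr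
    constructor
    · rw [Finset.mem_filter]
      refine ⟨hjI, ?_⟩
      rw [hg j, Finset.mem_filter, Finset.mem_Icc]
      exact ⟨⟨by omega, by omega⟩, Or.inl hxmod⟩
    · intro s hs
      rw [Finset.mem_filter, hg s, Finset.mem_filter, Finset.mem_Icc] at hs
      obtain ⟨hsI, _, h | h⟩ := hs
      · rw [hxmod] at h
        exact mod_inj_Icc (hI hsI) hjIcc h.symm
      · omega
  -- i + r ≤ j
  have hia : i ≤ a := hmin a ha rfl
  have hib : i ≤ b := hmin b hb hmod.symm
  have haj : a ≤ j := hmax a ha rfl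
  have hbj : b ≤ j := hmax b hb hmod.symm
  have hij : i < j := by omega
  have hdvd : r ∣ j - i := (Nat.modEq_iff_dvd' hij.le).mp (hi.trans hj.symm)
  have hrij : r ≤ j - i := Nat.le_of_dvd (by omega) hdvd
  refine ⟨?_, ?_, ?_⟩
  · rw [mem_symmDiffs_iff, hfi]; simp
  · rw [mem_symmDiffs_iff, hfj]; simp
  · omega
end
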